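/- Let G be a strictly m-degenerate finite simple graph and (H, f) a valued cover of G with f(v,1) + f(v,2) + ⋯ + f(v,κ) ≥ m for every vertex v ∈ V(G). Then H has a strictly f-degenerate transversal. -/

import Mathlib

open SimpleGraph

universe u

/-- `H` is a cover of `G` with `κ` parts: every edge of `H` joins distinct fibres
`X_u`, `X_v` with `uv ∈ E(G)` (in particular each fibre is independent), and the
edges between two fibres form a (possibly empty) matching. -/
def IsCover {V : Type u} (κ : ℕ) (G : SimpleGraph V) (H : SimpleGraph (V × Fin κ)) : Prop :=
  (∀ (u v : V) (p q : Fin κ), H.Adj (u, p) (v, q) → G.Adj u v) ∧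
  (∀ (u v : V) (p q q' : Fin κ), H.Adj (u, p) (v, q) → H.Adj (u, p) (v, q') → q = q')

/-- The subgraph of `Γ` induced on `R` is strictly `f`-degenerate: every nonempty
subgraph with vertices inside `R` has a vertex whose degree there is `< f`. -/
def StrictlyFDegenerateOn {α : Type u} (Γ : SimpleGraph α) (f : α → ℕ) (R : Set α) : Prop :=
  ∀ S : Set α, S ⊆ R → S.Nonempty → ∃ x ∈ S, (S ∩ {y | Γ.Adj x y}).ncard < f x

/-- `R` is a transversal of a cover with fibres `X_v = {v} × Fin κ`. -/
def IsTransversal {V : Type u} {κ : ℕ} (R : Set (V × Fin κ)) : Prop :=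
  ∀ v : V, ∃! p : Fin κ, (v, p) ∈ R

/-- `H` has a strictly `f`-degenerate transversal. -/
def HasSFDTransversal {V : Type u} {κ : ℕ} (H : SimpleGraph (V × Fin κ))
    (f : V × Fin κ → ℕ) : Prop :=
  ∃ R : Set (V × Fin κ), IsTransversal R ∧ StrictlyFDegenerateOn H f R

/-- If `G` is strictly `m`-degenerate and `(H, f)` is a valued
cover of `G` with `∑ q f(v,q) ≥ m` for every vertex `v`, then `H` has a strictly
`f`-degenerate transversal. -/
theorem hasSFDTransversal_of_strictlyDegenerate
    {V : Type} [Fintype V] (G : SimpleGraph V) (m : ℕ)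
    (hG : StrictlyFDegenerateOn G (fun _ => m) Set.univ) (κ : ℕ)
    (H : SimpleGraph (V × Fin κ)) (hH : IsCover κ G H) (f : V × Fin κ → ℕ)
    (hf : ∀ v : V, m ≤ ∑ q : Fin κ, f (v, q)) :
    HasSFDTransversal H f := by
  classical
  suffices h : ∀ T : Finset V, ∃ R : Set (V × Fin κ),
      (∀ x : V × Fin κ, x ∈ R → x.1 ∈ T) ∧ (∀ v ∈ T, ∃! p : Fin κ, (v, p) ∈ R) ∧
      StrictlyFDegenerateOn H f R by
    obtain ⟨R, _, hR2, hR3⟩ := h Finset.univ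
    exact ⟨R, fun v => hR2 v (Finset.mem_univ v), hR3⟩
  intro T
  induction T using Finset.strongInduction with
  | _ T IH =>
  rcases T.eq_empty_or_nonempty with rfl | hT
  · refine ⟨∅, by simp, by simp, fun S hS hne => absurd (Set.subset_empty_iff.mp hS)
      (Set.nonempty_iff_ne_empty.mp hne)⟩
  · obtain ⟨v, hvS, hvdeg⟩ := hG (↑T) (Set.subset_univ _) (by exact_mod_cast hT)
    simp only [Finset.mem_coe] at hvS
    obtain ⟨R', hR'1, hR'2, hR'3⟩ := IH (T.erase v) (Finset.erase_ssubset hvS)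
    have key : ∃ p : Fin κ, (R' ∩ {y | H.Adj (v, p) y}).ncard < f (v, p) := by
      by_contra hcon
      push_neg at hcon
      have hsum : m ≤ ∑ p : Fin κ, (R' ∩ {y | H.Adj (v, p) y}).ncard :=
        le_trans (hf v) (Finset.sum_le_sum fun p _ => hcon p)
      set Sp : Fin κ → Finset (V × Fin κ) :=
        fun p => Finset.univ.filter (fun y => y ∈ R' ∧ H.Adj (v, p) y) with hSp
      have hnc : ∀ p : Fin κ, (R' ∩ {y | H.Adj (v, p) y}).ncard = (Sp p).card := by
        intro p
        rw [← Set.ncard_coe_finset]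
        congr 1
        ext y
        simp [hSp, Set.mem_inter_iff]
      have hinj : ((Finset.univ : Finset (Fin κ)).sigma Sp).card ≤
          (T.filter (fun u => G.Adj v u)).card := by
        apply Finset.card_le_card_of_injOn (fun z => z.2.1)
        · intro z hz
          simp only [Finset.mem_coe, Finset.mem_sigma, Finset.mem_univ, Finset.mem_filter, true_and, hSp] at hz
          obtain ⟨hzR, hzadj⟩ := hz
          show z.2.1 ∈ T.filter (fun u => G.Adj v u)
          simp only [Finset.mem_filter]
          exact ⟨Finset.mem_of_mem_erase (hR'1 _ hzR), hH.1 v z.2.1 z.1 z.2.2 hzadj⟩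
        · intro z hz w hw hzw
          simp only [Finset.mem_coe, Finset.mem_sigma, Finset.mem_univ, Finset.mem_filter,
            true_and, hSp] at hz hw
          obtain ⟨hzR, hzadj⟩ := hz
          obtain ⟨hwR, hwadj⟩ := hw
          have hzw' : z.2.1 = w.2.1 := hzw
          have hu : z.2.1 ∈ T.erase v := hR'1 _ hzR
          obtain ⟨q, -, huniq⟩ := hR'2 z.2.1 hu
          have h1 : z.2.2 = q := huniq _ hzR
          have h2 : w.2.2 = q := by
            apply huniq
            show (z.2.1, w.2.2) ∈ R'
            rw [hzw']
            exact hwR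
          have hy : z.2 = w.2 := by
            have e1 : z.2 = (z.2.1, z.2.2) := rfl
            have e2 : w.2 = (w.2.1, w.2.2) := rfl
            rw [e1, e2, h1, h2, hzw']
          have hp : z.1 = w.1 := by
            apply hH.2 z.2.1 v z.2.2 z.1 w.1 hzadj.symm
            have := hwadj.symm
            rw [← hy] at this
            exact this
          exact Sigma.ext hp (by rw [hy])
      have hcard : ((↑T : Set V) ∩ {y | G.Adj v y}).ncard =
          (T.filter (fun u => G.Adj v u)).card := by
        rw [← Set.ncard_coe_finset]
        congr 1
        ext u
        simp [Set.mem_inter_iff]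
      have : m < m := by
        calc m ≤ ∑ p : Fin κ, (R' ∩ {y | H.Adj (v, p) y}).ncard := hsum
        _ = ∑ p : Fin κ, (Sp p).card := by simp_rw [hnc]
        _ = ((Finset.univ : Finset (Fin κ)).sigma Sp).card := (Finset.card_sigma _ _).symm
        _ ≤ (T.filter (fun u => G.Adj v u)).card := hinj
        _ = ((↑T : Set V) ∩ {y | G.Adj v y}).ncard := hcard.symm
        _ < m := hvdeg
      exact absurd this (lt_irrefl m)
    obtain ⟨p, hp⟩ := key
    refine ⟨insert (v, p) R', ?_, ?_, ?_⟩
    · intro x hx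
      rcases hx with rfl | hx
      · exact hvS
      · exact Finset.mem_of_mem_erase (hR'1 _ hx)
    · intro u hu
      by_cases huv : u = v
      · subst huv
        refine ⟨p, Set.mem_insert _ _, ?_⟩
        intro q hq
        rcases hq with hq | hq
        · exact (Prod.mk.injEq _ _ _ _ ▸ hq).2
        · exact absurd (hR'1 _ hq) (Finset.notMem_erase u T)
      · obtain ⟨q, hq, huniq⟩ := hR'2 u (Finset.mem_erase.mpr ⟨huv, hu⟩)
        refine ⟨q, Set.mem_insert_of_mem _ hq, ?_⟩
        intro q' hq'
        rcases hq' with hq' | hq'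
        · exact absurd (Prod.mk.injEq _ _ _ _ ▸ hq').1 huv
        · exact huniq q' hq'
    · intro S hS hne
      by_cases hvp : (v, p) ∈ S
      · refine ⟨(v, p), hvp, ?_⟩
        refine lt_of_le_of_lt (Set.ncard_le_ncard ?_ (Set.toFinite _)) hp
        intro y hy
        rcases hS hy.1 with rfl | hy'
        · exact absurd hy.2 (H.irrefl)
        · exact ⟨hy', hy.2⟩
      · apply hR'3 S ?_ hne
        intro y hy
        rcases hS hy with rfl | hy'
        · exact absurd hy hvp
        · exact hy'
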